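/- For every k ≥ 3, the spasm of the cycle C_k is contained in the spasm of the cycle C_{k+2}: every graph obtainable from C_k by iteratively merging independent sets is also obtainable from C_{k+2} by iteratively merging independent sets. -/
import Mathlib

/-- `H` belongs to the spasm of `G`: `H` is obtained from `G` by iteratively
merging independent sets, i.e. `H` is a quotient of `G` by a partition into
independent sets (fibers of a surjection `f`), with adjacency induced from
`G`. -/
def InSpasm {V W : Type} (H : SimpleGraph W) (G : SimpleGraph V) : Prop :=
  ∃ f : V → W, Function.Surjective f ∧
    (∀ u v : V, f u = f v → u ≠ v → ¬ G.Adj u v) ∧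
    (∀ a b : W, H.Adj a b ↔ a ≠ b ∧ ∃ u v : V, f u = a ∧ f v = b ∧ G.Adj u v)

lemma inSpasm_trans {U V W : Type} {H : SimpleGraph W} {G : SimpleGraph V}
    {G' : SimpleGraph U} (h1 : InSpasm H G) (h2 : InSpasm G G') : InSpasm H G' := by
  obtain ⟨f, hfsurj, hfind, hfadj⟩ := h1
  obtain ⟨g, hgsurj, hgind, hgadj⟩ := h2
  refine ⟨f ∘ g, hfsurj.comp hgsurj, ?_, ?_⟩
  · intro u v heq hne hadj
    by_cases hg : g u = g v
    · exact hgind u v hg hne hadj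
    · exact hfind _ _ heq hg ((hgadj _ _).2 ⟨hg, u, v, rfl, rfl, hadj⟩)
  · intro a b
    rw [hfadj a b]
    constructor
    · rintro ⟨hne, u, v, hu, hv, huv⟩
      obtain ⟨_, x, y, hx, hy, hxy⟩ := (hgadj u v).1 huv
      exact ⟨hne, x, y, by rw [Function.comp_apply, hx, hu],
        by rw [Function.comp_apply, hy, hv], hxy⟩
    · rintro ⟨hne, x, y, hx, hy, hxy⟩
      by_cases hg : g x = g y
      · exact absurd (by rw [← hx, ← hy, Function.comp_apply, Function.comp_apply, hg]) hne
      · exact ⟨hne, g x, g y, hx, hy, (hgadj _ _).2 ⟨hg, x, y, rfl, rfl, hxy⟩⟩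

lemma cyc_adj {n : ℕ} (hn : 3 ≤ n) (u v : Fin n) :
    (SimpleGraph.cycleGraph n).Adj u v ↔
      (v.val = u.val + 1 ∨ u.val = v.val + 1 ∨
       (u.val = 0 ∧ v.val = n - 1) ∨ (v.val = 0 ∧ u.val = n - 1)) := by
  have hu := u.isLt; have hv := v.isLt
  rw [SimpleGraph.cycleGraph_adj', Fin.sub_def, Fin.sub_def]
  simp only
  have key : ∀ m : ℕ, m < 2 * n → m % n = if m < n then m else m - n := by
    intro m hm
    split_ifs with h
    · exact Nat.mod_eq_of_lt h
    · rw [Nat.mod_eq_sub_mod (le_of_not_gt h)]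
      exact Nat.mod_eq_of_lt (by omega)
  rw [key _ (by omega), key _ (by omega)]
  split_ifs <;> omega

lemma cyc_spasm (k : ℕ) (hk : 3 ≤ k) :
    InSpasm (SimpleGraph.cycleGraph k) (SimpleGraph.cycleGraph (k + 2)) := by
  refine ⟨fun i => if h : i.val < k then ⟨i.val, h⟩ else ⟨i.val - 2, by omega⟩, ?_, ?_, ?_⟩
  · intro a
    refine ⟨⟨a.val, by omega⟩, ?_⟩
    simp only
    rw [dif_pos a.isLt]
  · intro u v heq hne hadj
    rw [cyc_adj (by omega)] at hadj
    have hne' : u.val ≠ v.val := fun h => hne (Fin.ext h)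
    have hu := u.isLt; have hv := v.isLt
    simp only at heq
    split_ifs at heq with h1 h2 h2 <;>
      rw [Fin.mk.injEq] at heq <;> omega
  · intro a b
    have ha := a.isLt; have hb := b.isLt
    constructor
    · intro hab
      have hne := hab.ne
      have hne' : a.val ≠ b.val := fun h => hne (Fin.ext h)
      rw [cyc_adj hk] at hab
      refine ⟨hne, ?_⟩
      rcases hab with h | h | ⟨h1, h2⟩ | ⟨h1, h2⟩
      · refine ⟨⟨a.val, by omega⟩, ⟨b.val, by omega⟩, ?_, ?_, ?_⟩
        · simp only; rw [dif_pos (show a.val < k from ha)]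
        · simp only; rw [dif_pos (show b.val < k from hb)]
        · rw [cyc_adj (by omega)]; left; exact h
      · refine ⟨⟨a.val, by omega⟩, ⟨b.val, by omega⟩, ?_, ?_, ?_⟩
        · simp only; rw [dif_pos (show a.val < k from ha)]
        · simp only; rw [dif_pos (show b.val < k from hb)]
        · rw [cyc_adj (by omega)]; right; left; exact h
      · refine ⟨⟨0, by omega⟩, ⟨k + 1, by omega⟩, ?_, ?_, ?_⟩
        · simp only; rw [dif_pos (show 0 < k by omega)]; exact Fin.ext (by simp [h1])
        · simp only; rw [dif_neg (show ¬ (k + 1 < k) by omega)]; exact Fin.ext (by simp; omega)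
        · rw [cyc_adj (by omega)]; right; right; left; exact ⟨rfl, rfl⟩
      · refine ⟨⟨k + 1, by omega⟩, ⟨0, by omega⟩, ?_, ?_, ?_⟩
        · simp only; rw [dif_neg (show ¬ (k + 1 < k) by omega)]; exact Fin.ext (by simp; omega)
        · simp only; rw [dif_pos (show 0 < k by omega)]; exact Fin.ext (by simp [h1])
        · rw [cyc_adj (by omega)]; right; right; right; exact ⟨rfl, rfl⟩
    · rintro ⟨hne, u, v, hu, hv, hadj⟩
      rw [cyc_adj (by omega)] at hadj
      rw [cyc_adj hk]
      have hu' := u.isLt; have hv' := v.isLt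
      have hA : a.val = if u.val < k then u.val else u.val - 2 := by
        rw [← hu]; simp only; split_ifs <;> rfl
      have hB : b.val = if v.val < k then v.val else v.val - 2 := by
        rw [← hv]; simp only; split_ifs <;> rfl
      split_ifs at hA hB <;> omega

/-- For every `k ≥ 3`, the spasm of `C_k` is contained in the spasm of
`C_{k+2}`. -/
theorem stmt19 (k : ℕ) (hk : 3 ≤ k) {W : Type} (H : SimpleGraph W)
    (h : InSpasm H (SimpleGraph.cycleGraph k)) :
    InSpasm H (SimpleGraph.cycleGraph (k + 2)) := by
  exact inSpasm_trans h (cyc_spasm k hk)
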